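/- Under the action of a 2-jet (E+g₂) ∈ N(m)_{k+1} on a jet of metric h = h₀ + h₁ + ⋯ ∈ (ℰ_k ⊗ S²ℝ^{m*})^{reg}, the degree-1 component transforms as ((E+g₂)·h)₁ = h₁ − 2 ∑_{i,j} (∂²g₂/∂e_i∂z^j) ⊗ (∂h₀/∂u^i) u^j evaluated with h₀ the constant term; in particular when h₀ = ∑_i (u^i)², this reads ((E+g₂)·h)₁ = h₁ − 2∑_{i,j}(∂g_{2,i}/∂z^j) ⊗ u^i u^j. -/

import Mathlib

open MvPolynomial

section Helpers

variable {σ : Type*} [DecidableEq σ]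

omit [DecidableEq σ] in
lemma hc0_eq (p : MvPolynomial σ ℝ) :
    homogeneousComponent 0 p = C (coeff 0 p) := homogeneousComponent_zero p

omit [DecidableEq σ] in
lemma hc0_mul (p q : MvPolynomial σ ℝ) :
    homogeneousComponent 0 (p * q)
      = homogeneousComponent 0 p * homogeneousComponent 0 q := by
  rw [homogeneousComponent_zero, homogeneousComponent_zero, homogeneousComponent_zero, ← map_mul]
  congr 1
  have := map_mul (constantCoeff (σ := σ) (R := ℝ)) p q
  simpa [constantCoeff_eq] using this

lemma degree_one_single {d : σ →₀ ℕ} (hd : d.degree = 1) :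
    ∃ k, d = Finsupp.single k 1 := by
  have hne : d.support.Nonempty := by
    rw [Finset.nonempty_iff_ne_empty]
    intro hsup
    rw [Finsupp.support_eq_empty.mp hsup] at hd
    simp at hd
  obtain ⟨k, hk⟩ := hne
  refine ⟨k, ?_⟩
  have hdk1 : d k = 1 := by
    have h1 : 1 ≤ d k := Nat.one_le_iff_ne_zero.mpr (Finsupp.mem_support_iff.mp hk)
    have h2 : d k ≤ d.degree := Finsupp.le_degree k d
    omega
  ext j
  rcases eq_or_ne j k with rfl | hjk
  · simp [hdk1]
  · rw [Finsupp.single_apply, if_neg (Ne.symm hjk)]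
    by_contra hj
    have hjs : j ∈ d.support.erase k := by
      simp [Finsupp.mem_support_iff, hj, hjk]
    have hle : d j ≤ ∑ i ∈ d.support.erase k, d i :=
      Finset.single_le_sum (by intros; positivity) hjs
    have : d k + ∑ i ∈ d.support.erase k, d i = d.degree := Finset.add_sum_erase _ _ hk
    omega

lemma hc1_mul (p q : MvPolynomial σ ℝ) :
    homogeneousComponent 1 (p * q)
      = homogeneousComponent 0 p * homogeneousComponent 1 q
        + homogeneousComponent 1 p * homogeneousComponent 0 q := by
  ext d
  rw [coeff_add, coeff_homogeneousComponent, hc0_eq, hc0_eq, coeff_C_mul,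
    mul_comm (homogeneousComponent 1 p) (C (coeff 0 q)), coeff_C_mul,
    coeff_homogeneousComponent, coeff_homogeneousComponent]
  split_ifs with hd
  · obtain ⟨k, rfl⟩ := degree_one_single hd
    rw [coeff_mul]
    rw [Finsupp.antidiagonal_single, Finset.sum_map]
    have : (Finset.HasAntidiagonal.antidiagonal 1 : Finset (ℕ × ℕ)) = {(0,1),(1,0)} := rfl
    rw [this]
    simp [mul_comm]
  · ring

omit [DecidableEq σ] in
lemma pderiv_isHomog {p : MvPolynomial σ ℝ} (hp : p.IsHomogeneous 2) (i : σ) :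
    (pderiv i p).IsHomogeneous 1 := by
  nth_rewrite 1 [p.as_sum]
  rw [map_sum]
  apply IsHomogeneous.sum
  intro d hd
  rw [pderiv_monomial]
  rcases Nat.eq_zero_or_pos (d i) with h0 | h1
  · rw [h0]
    simp only [Nat.cast_zero, mul_zero]
    rw [monomial_zero]
    exact isHomogeneous_zero _ _ _
  · apply isHomogeneous_monomial
    have hdeg : d.degree = 2 := by
      have h2 := hp (mem_support_iff.mp hd)
      rw [Finsupp.degree_eq_weight_one]
      exact h2
    have hle : Finsupp.single i 1 ≤ d := by
      rw [Finsupp.single_le_iff]; exact h1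
    have hadd : d - Finsupp.single i 1 + Finsupp.single i 1 = d := tsub_add_cancel_of_le hle
    have hs : (Finsupp.single i 1).degree = 1 := by
      simp [Finsupp.degree_single]
    have := congrArg Finsupp.degree hadd
    rw [Finsupp.degree_eq_weight_one] at this hs hdeg ⊢
    rw [map_add] at this
    omega

lemma hc_aeval (g : σ → MvPolynomial σ ℝ) (hg : ∀ l, (g l).IsHomogeneous 2)
    (p : MvPolynomial σ ℝ) :
    homogeneousComponent 0 (aeval (fun l => (X l : MvPolynomial σ ℝ) + g l) p)
        = homogeneousComponent 0 p ∧
    homogeneousComponent 1 (aeval (fun l => (X l : MvPolynomial σ ℝ) + g l) p)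
        = homogeneousComponent 1 p := by
  have hg0 : ∀ l, homogeneousComponent 0 (g l) = 0 := by
    intro l
    rw [homogeneousComponent_of_mem (hg l)]; simp
  have hg1 : ∀ l, homogeneousComponent 1 (g l) = 0 := by
    intro l
    rw [homogeneousComponent_of_mem (hg l)]; simp
  have hX0 : ∀ l : σ, homogeneousComponent 0 (X l : MvPolynomial σ ℝ) = 0 := by
    intro l
    rw [homogeneousComponent_of_mem (isHomogeneous_X ℝ l)]; simp
  have hX1 : ∀ l : σ, homogeneousComponent 1 (X l : MvPolynomial σ ℝ) = X l := by
    intro l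
    rw [homogeneousComponent_of_mem (isHomogeneous_X ℝ l)]; simp
  induction p using MvPolynomial.induction_on with
  | C a =>
    constructor <;> simp [aeval_C, algebraMap_eq]
  | add p q hp hq =>
    exact ⟨by rw [map_add, map_add, hp.1, hq.1, map_add], by rw [map_add, map_add, hp.2, hq.2, map_add]⟩
  | mul_X p i hp =>
    rw [map_mul, aeval_X]
    constructor
    · simp only [hc0_mul, map_add, hg0, hX0, add_zero, mul_zero]
    · simp only [hc1_mul, hc0_mul, map_add, hg0, hg1, hX0, hX1, hp.1, hp.2,
        add_zero, zero_add, mul_zero, zero_mul]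

end Helpers

/-- Truncation of a polynomial to total degree ≤ `d`. -/
noncomputable def trunc (m d : ℕ) (p : MvPolynomial (Fin m) ℝ) : MvPolynomial (Fin m) ℝ :=
  ∑ i ∈ Finset.range (d + 1), homogeneousComponent i p

lemma trunc_one_eq (m : ℕ) (p : MvPolynomial (Fin m) ℝ) :
    trunc m 1 p = homogeneousComponent 0 p + homogeneousComponent 1 p := by
  rw [trunc, Finset.sum_range_succ, Finset.sum_range_one]

lemma hc0_trunc (m : ℕ) (p : MvPolynomial (Fin m) ℝ) :
    homogeneousComponent 0 (trunc m 1 p) = homogeneousComponent 0 p := by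
  rw [trunc_one_eq, map_add,
    homogeneousComponent_of_mem (homogeneousComponent_mem 0 p),
    homogeneousComponent_of_mem (homogeneousComponent_mem 1 p)]
  simp

lemma hc1_trunc (m : ℕ) (p : MvPolynomial (Fin m) ℝ) :
    homogeneousComponent 1 (trunc m 1 p) = homogeneousComponent 1 p := by
  rw [trunc_one_eq, map_add,
    homogeneousComponent_of_mem (homogeneousComponent_mem 0 p),
    homogeneousComponent_of_mem (homogeneousComponent_mem 1 p)]
  simp

theorem metric_jet_degree_one_transform (m : ℕ)
    (g₂ : Fin m → MvPolynomial (Fin m) ℝ) (hg₂ : ∀ a, (g₂ a).IsHomogeneous 2)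
    (h H : Fin m → Fin m → MvPolynomial (Fin m) ℝ)
    (hrel : ∀ i j, trunc m 1 (h i j) =
      trunc m 1 (∑ a, ∑ b,
        ((if a = i then (1 : MvPolynomial (Fin m) ℝ) else 0) + pderiv i (g₂ a)) *
        ((if b = j then (1 : MvPolynomial (Fin m) ℝ) else 0) + pderiv j (g₂ b)) *
        aeval (fun l => (X l : MvPolynomial (Fin m) ℝ) + g₂ l) (H a b))) :
    (∀ i j, homogeneousComponent 1 (H i j) = homogeneousComponent 1 (h i j)
        - ∑ a, (homogeneousComponent 0 (h a j) * pderiv i (g₂ a)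
              + homogeneousComponent 0 (h i a) * pderiv j (g₂ a))) ∧
    ((∀ i j, homogeneousComponent 0 (h i j)
        = if i = j then (1 : MvPolynomial (Fin m) ℝ) else 0) →
      ∀ i j, homogeneousComponent 1 (H i j) = homogeneousComponent 1 (h i j)
          - (pderiv j (g₂ i) + pderiv i (g₂ j))) := by
  have hA0 : ∀ a b, homogeneousComponent 0
      (aeval (fun l => (X l : MvPolynomial (Fin m) ℝ) + g₂ l) (H a b))
        = homogeneousComponent 0 (H a b) := fun a b => (hc_aeval g₂ hg₂ (H a b)).1
  have hA1 : ∀ a b, homogeneousComponent 1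
      (aeval (fun l => (X l : MvPolynomial (Fin m) ℝ) + g₂ l) (H a b))
        = homogeneousComponent 1 (H a b) := fun a b => (hc_aeval g₂ hg₂ (H a b)).2
  have hP0 : ∀ (a i : Fin m), homogeneousComponent 0
      ((if a = i then (1 : MvPolynomial (Fin m) ℝ) else 0) + pderiv i (g₂ a))
        = (if a = i then (1 : MvPolynomial (Fin m) ℝ) else 0) := by
    intro a i
    rw [map_add, homogeneousComponent_of_mem (pderiv_isHomog (hg₂ a) i),
      if_neg (by omega : ¬(0 : ℕ) = 1), add_zero]
    split_ifs with hai
    · rw [hc0_eq]; simp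
    · exact map_zero _
  have hP1 : ∀ (a i : Fin m), homogeneousComponent 1
      ((if a = i then (1 : MvPolynomial (Fin m) ℝ) else 0) + pderiv i (g₂ a))
        = pderiv i (g₂ a) := by
    intro a i
    rw [map_add, homogeneousComponent_of_mem (pderiv_isHomog (hg₂ a) i), if_pos rfl]
    have h1 : homogeneousComponent 1 (1 : MvPolynomial (Fin m) ℝ) = 0 :=
      homogeneousComponent_eq_zero 1 1 (by norm_num [totalDegree_one])
    split_ifs with hai
    · rw [h1, zero_add]
    · rw [map_zero, zero_add]
  have key0 : ∀ i j, homogeneousComponent 0 (H i j) = homogeneousComponent 0 (h i j) := by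
    intro i j
    have hthis := congrArg (homogeneousComponent 0) (hrel i j)
    rw [hc0_trunc, hc0_trunc, map_sum] at hthis
    simp_rw [map_sum, hc0_mul, hP0, hA0] at hthis
    simp only [ite_mul, one_mul, zero_mul, Finset.sum_ite_irrel, Finset.sum_const_zero,
      Finset.sum_ite_eq', Finset.mem_univ, if_true] at hthis
    exact hthis.symm
  have key1 : ∀ i j, homogeneousComponent 1 (h i j) = homogeneousComponent 1 (H i j)
      + ((∑ b, pderiv j (g₂ b) * homogeneousComponent 0 (H i b))
        + ∑ a, pderiv i (g₂ a) * homogeneousComponent 0 (H a j)) := by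
    intro i j
    have hthis := congrArg (homogeneousComponent 1) (hrel i j)
    rw [hc1_trunc, hc1_trunc, map_sum] at hthis
    have hterm : ∀ a b : Fin m, homogeneousComponent 1
        (((if a = i then (1 : MvPolynomial (Fin m) ℝ) else 0) + pderiv i (g₂ a)) *
        ((if b = j then (1 : MvPolynomial (Fin m) ℝ) else 0) + pderiv j (g₂ b)) *
        aeval (fun l => (X l : MvPolynomial (Fin m) ℝ) + g₂ l) (H a b))
        = (if a = i then (if b = j then homogeneousComponent 1 (H a b) else 0) else 0)
          + ((if a = i then pderiv j (g₂ b) * homogeneousComponent 0 (H a b) else 0)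
          + (if b = j then pderiv i (g₂ a) * homogeneousComponent 0 (H a b) else 0)) := by
      intro a b
      rw [hc1_mul, hc0_mul, hc1_mul, hP0 a i, hP1 a i, hP0 b j, hP1 b j, hA0, hA1]
      split_ifs <;> ring
    simp_rw [map_sum, hterm] at hthis
    simp only [Finset.sum_add_distrib, Finset.sum_ite_irrel, Finset.sum_const_zero,
      Finset.sum_ite_eq', Finset.mem_univ, if_true, Finset.sum_ite_eq] at hthis
    rw [hthis]; try ring
  have part1 : ∀ i j, homogeneousComponent 1 (H i j) = homogeneousComponent 1 (h i j)
        - ∑ a, (homogeneousComponent 0 (h a j) * pderiv i (g₂ a)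
              + homogeneousComponent 0 (h i a) * pderiv j (g₂ a)) := by
    intro i j
    rw [eq_sub_iff_add_eq, key1 i j]
    congr 1
    rw [Finset.sum_add_distrib, add_comm]
    congr 1
    · exact Finset.sum_congr rfl fun a _ => by rw [← key0, mul_comm]
    · exact Finset.sum_congr rfl fun a _ => by rw [← key0, mul_comm]
  refine ⟨part1, ?_⟩
  · intro h0 i j
    rw [part1 i j]
    congr 1
    simp_rw [h0]
    simp only [ite_mul, one_mul, zero_mul, Finset.sum_add_distrib, Finset.sum_ite_eq,
      Finset.sum_ite_eq', Finset.mem_univ, if_true]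
    try rw [add_comm]
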